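/- Let ξ be a centered real random variable with E ξ² < ∞, ξ_1, ξ_2, … independent copies, and S_n = n^{-1/2} Σ_{i=1}^n ξ_i. If for some fixed p ∈ [2, ∞) one has E|ξ|^p < ∞, then sup_n E|S_n|^p < ∞. -/

import Mathlib

open MeasureTheory Real ProbabilityTheory
open scoped ENNReal NNReal

private lemma abs_sq_rpow (p v : ℝ) : (v ^ 2 : ℝ) ^ (p / 2) = |v| ^ p := by
  rw [← sq_abs, ← Real.rpow_natCast |v| 2, ← Real.rpow_mul (abs_nonneg v)]
  congr 1
  push_cast
  ring

private lemma myDeriv1 {p : ℝ} (hp : 2 ≤ p) (u : ℝ) :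
    HasDerivAt (fun u : ℝ => |u| ^ p) (p * u * |u| ^ (p - 2)) u := by
  have h1 : HasDerivAt (fun u : ℝ => u ^ 2) (2 * u) u := by
    simpa [mul_comm] using hasDerivAt_pow 2 u
  have h2 := h1.rpow_const (p := p / 2) (Or.inr (by linarith))
  have hfun : (fun u : ℝ => (u ^ 2) ^ (p / 2)) = fun u : ℝ => |u| ^ p :=
    funext fun v => abs_sq_rpow p v
  have hder : 2 * u * (p / 2) * (u ^ 2) ^ (p / 2 - 1) = p * u * |u| ^ (p - 2) := by
    have h : (u ^ 2 : ℝ) ^ (p / 2 - 1) = |u| ^ (p - 2) := by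
      rw [show p / 2 - 1 = (p - 2) / 2 by ring, abs_sq_rpow]
    rw [h]; ring
  rw [hfun, hder] at h2
  exact h2

private lemma myDeriv2 {p : ℝ} (hp : 2 ≤ p) {u : ℝ} (hu : u ≠ 0) :
    HasDerivAt (fun u : ℝ => p * u * |u| ^ (p - 2)) (p * (p - 1) * |u| ^ (p - 2)) u := by
  have hu2 : (u ^ 2 : ℝ) ≠ 0 := pow_ne_zero 2 hu
  have h1 : HasDerivAt (fun u : ℝ => u ^ 2) (2 * u) u := by
    simpa [mul_comm] using hasDerivAt_pow 2 u
  have hA := h1.rpow_const (p := (p - 2) / 2) (Or.inl hu2)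
  have hB := ((hasDerivAt_id u).mul hA).const_mul p
  have hfun : (fun u : ℝ => p * (u * (u ^ 2) ^ ((p - 2) / 2)))
      = fun u : ℝ => p * u * |u| ^ (p - 2) := by
    funext v
    rw [abs_sq_rpow]; ring
  have hder : p * (1 * (u ^ 2) ^ ((p - 2) / 2)
        + u * (2 * u * ((p - 2) / 2) * (u ^ 2) ^ ((p - 2) / 2 - 1)))
      = p * (p - 1) * |u| ^ (p - 2) := by
    have h3 : u * (2 * u * ((p - 2) / 2) * (u ^ 2) ^ ((p - 2) / 2 - 1))
        = (p - 2) * ((u ^ 2) ^ ((p - 2) / 2 - 1) * u ^ 2) := by ring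
    have h4 : (u ^ 2 : ℝ) ^ ((p - 2) / 2 - 1) * u ^ 2 = (u ^ 2) ^ ((p - 2) / 2) := by
      conv_rhs => rw [show (p - 2) / 2 = ((p - 2) / 2 - 1) + 1 by ring, Real.rpow_add_one hu2]
    rw [h3, h4, abs_sq_rpow]; ring
  simp only [Pi.mul_apply, id_eq] at hB
  rw [hfun] at hB
  rw [← hder]
  exact hB

private lemma g1_cont {p : ℝ} (hp : 2 ≤ p) :
    Continuous (fun u : ℝ => p * u * |u| ^ (p - 2)) := by
  have h1 : Continuous (fun u : ℝ => |u| ^ (p - 2)) :=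
    continuous_abs.rpow_const (fun x => Or.inr (by linarith))
  exact (continuous_const.mul continuous_id).mul h1

private lemma abs_rpow_le_add {q : ℝ} (hq : 0 ≤ q) {a b c : ℝ} (ha : |c| ≤ max |a| |b|) :
    |c| ^ q ≤ |a| ^ q + |b| ^ q := by
  have h1 : |c| ^ q ≤ (max |a| |b|) ^ q :=
    Real.rpow_le_rpow (abs_nonneg c) ha hq
  rcases max_cases |a| |b| with ⟨h, _⟩ | ⟨h, _⟩ <;> rw [h] at h1 <;> nlinarith [Real.rpow_nonneg (abs_nonneg a) q, Real.rpow_nonneg (abs_nonneg b) q]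

private lemma g1_diff_le {p : ℝ} (hp : 2 ≤ p) {a b : ℝ} (hab : a < b) :
    |p * b * |b| ^ (p - 2) - p * a * |a| ^ (p - 2)|
      ≤ p * (p - 1) * (b - a) * (|a| ^ (p - 2) + |b| ^ (p - 2)) := by
  have hp0 : 0 < p := by linarith
  have hba : (0:ℝ) ≤ b - a := by linarith
  have hrn1 := Real.rpow_nonneg (abs_nonneg a) (p - 2)
  have hrn2 := Real.rpow_nonneg (abs_nonneg b) (p - 2)
  by_cases h0 : a < 0 ∧ 0 < b
  · -- 0 strictly inside; bound each term directly
    have hane : |a| ≤ b - a := by rw [abs_of_neg h0.1]; linarith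
    have hbne : |b| ≤ b - a := by rw [abs_of_pos h0.2]; linarith
    have hA : |p * a * |a| ^ (p - 2)| ≤ p * (b - a) * |a| ^ (p - 2) := by
      rw [abs_mul, abs_mul, abs_of_pos hp0, abs_of_nonneg hrn1]
      exact mul_le_mul_of_nonneg_right (mul_le_mul_of_nonneg_left hane hp0.le) hrn1
    have hB : |p * b * |b| ^ (p - 2)| ≤ p * (b - a) * |b| ^ (p - 2) := by
      rw [abs_mul, abs_mul, abs_of_pos hp0, abs_of_nonneg hrn2]
      exact mul_le_mul_of_nonneg_right (mul_le_mul_of_nonneg_left hbne hp0.le) hrn2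
    have hmid : p * (b - a) ≤ p * (p - 1) * (b - a) := by
      nlinarith [mul_nonneg (mul_nonneg hp0.le (by linarith : (0:ℝ) ≤ p - 2)) hba]
    calc |p * b * |b| ^ (p - 2) - p * a * |a| ^ (p - 2)|
        ≤ |p * b * |b| ^ (p - 2)| + |p * a * |a| ^ (p - 2)| := abs_sub _ _
      _ ≤ p * (b - a) * |b| ^ (p - 2) + p * (b - a) * |a| ^ (p - 2) := add_le_add hB hA
      _ = (p * (b - a)) * (|a| ^ (p - 2) + |b| ^ (p - 2)) := by ring
      _ ≤ (p * (p - 1) * (b - a)) * (|a| ^ (p - 2) + |b| ^ (p - 2)) :=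
          mul_le_mul_of_nonneg_right hmid (add_nonneg hrn1 hrn2)
  · -- no zero strictly inside; mean value theorem
    have hne : ∀ x ∈ Set.Ioo a b, x ≠ 0 := by
      intro x hx
      rcases not_and_or.1 h0 with h | h
      · push_neg at h
        exact ne_of_gt (lt_of_le_of_lt h hx.1)
      · push_neg at h
        exact ne_of_lt (lt_of_lt_of_le hx.2 h)
    obtain ⟨c, hc, hslope⟩ := exists_hasDerivAt_eq_slope
      (fun u : ℝ => p * u * |u| ^ (p - 2)) (fun u => p * (p - 1) * |u| ^ (p - 2)) hab
      (g1_cont hp).continuousOn (fun x hx => myDeriv2 hp (hne x hx))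
    rw [eq_div_iff (by linarith : b - a ≠ 0)] at hslope
    have hrc := Real.rpow_nonneg (abs_nonneg c) (p - 2)
    have hdiff : p * b * |b| ^ (p - 2) - p * a * |a| ^ (p - 2)
        = p * (p - 1) * |c| ^ (p - 2) * (b - a) := hslope.symm
    rw [hdiff]
    have hcle : |c| ≤ max |a| |b| := by
      rcases le_or_gt 0 c with h | h
      · exact le_max_of_le_right (by rw [abs_of_nonneg h]; exact (le_abs_self b).trans' hc.2.le)
      · refine le_max_of_le_left ?_
        rw [abs_of_neg h]
        calc -c ≤ -a := by linarith [hc.1]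
          _ ≤ |a| := neg_le_abs a
    have h1 : |c| ^ (p - 2) ≤ |a| ^ (p - 2) + |b| ^ (p - 2) :=
      abs_rpow_le_add (by linarith) hcle
    have hnn : (0:ℝ) ≤ p * (p - 1) := mul_nonneg hp0.le (by linarith)
    rw [abs_of_nonneg (mul_nonneg (mul_nonneg hnn hrc) hba)]
    calc p * (p - 1) * |c| ^ (p - 2) * (b - a)
        ≤ p * (p - 1) * (|a| ^ (p - 2) + |b| ^ (p - 2)) * (b - a) :=
          mul_le_mul_of_nonneg_right (mul_le_mul_of_nonneg_left h1 hnn) hba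
      _ = p * (p - 1) * (b - a) * (|a| ^ (p - 2) + |b| ^ (p - 2)) := by ring

private lemma abs_rpow_sub_two_mul_sq {p : ℝ} (hp : 2 ≤ p) (y : ℝ) :
    |y| ^ (p - 2) * y ^ 2 = |y| ^ p := by
  by_cases hy : y = 0
  · subst hy
    simp [Real.zero_rpow (by linarith : p ≠ 0)]
  · have h : |y| ≠ 0 := abs_ne_zero.2 hy
    rw [← sq_abs, ← Real.rpow_natCast |y| 2, ← Real.rpow_add (abs_pos.2 hy)]
    norm_num

private lemma taylor_ineq {p : ℝ} (hp : 2 ≤ p) (x y : ℝ) :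
    |x + y| ^ p ≤ |x| ^ p + p * x * |x| ^ (p - 2) * y
      + p * (p - 1) * 2 ^ p * (|x| ^ (p - 2) * y ^ 2 + |y| ^ p) := by
  have hp0 : 0 < p := by linarith
  have hrx := Real.rpow_nonneg (abs_nonneg x) (p - 2)
  have hry := Real.rpow_nonneg (abs_nonneg y) (p - 2)
  have h2p : (1:ℝ) ≤ 2 ^ (p - 2) := Real.one_le_rpow one_le_two (by linarith)
  have h2p' : (2:ℝ) ^ (p - 2) ≤ 2 ^ p :=
    Real.rpow_le_rpow_left_iff one_lt_two |>.2 (by linarith)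
  have hCnn : (0:ℝ) ≤ p * (p - 1) := mul_nonneg hp0.le (by linarith)
  by_cases hy : y = 0
  · subst hy
    have : (0:ℝ) ≤ p * (p - 1) * 2 ^ p * (|x| ^ (p - 2) * 0 ^ 2 + |0| ^ p) := by
      have := Real.rpow_nonneg (abs_nonneg (0:ℝ)) p
      have h2 := Real.rpow_nonneg (by norm_num : (0:ℝ) ≤ 2) p
      positivity
    simpa using this
  -- MVT: ∃ c with |c - x| ≤ |y|, |c| ≤ |x| + |y|, and f(x+y) - f(x) = g1(c) * y
  obtain ⟨c, hcx, hcb, heq⟩ : ∃ c : ℝ, |c - x| ≤ |y| ∧ |c| ≤ |x| + |y| ∧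
      |x + y| ^ p - |x| ^ p = (p * c * |c| ^ (p - 2)) * y := by
    rcases lt_or_gt_of_ne hy with hneg | hpos
    · have hab : x + y < x := by linarith
      obtain ⟨c, hc, hslope⟩ := exists_hasDerivAt_eq_slope
        (fun u : ℝ => |u| ^ p) (fun u => p * u * |u| ^ (p - 2)) hab
        (Continuous.continuousOn (by
          exact continuous_abs.rpow_const (fun x => Or.inr hp0.le)))
        (fun u _ => myDeriv1 hp u)
      rw [eq_div_iff (by linarith : x - (x + y) ≠ 0)] at hslope
      refine ⟨c, ?_, ?_, ?_⟩
      · rw [abs_of_neg hneg, abs_of_neg (by linarith [hc.2] : c - x < 0)]; linarith [hc.1]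
      · have : |c| ≤ max |x + y| |x| := by
          rcases le_or_gt 0 c with h | h
          · exact le_max_of_le_right (by rw [abs_of_nonneg h]; exact (le_abs_self x).trans' hc.2.le)
          · exact le_max_of_le_left (by rw [abs_of_neg h]; calc -c ≤ -(x+y) := by linarith [hc.1]
                                                             _ ≤ |x + y| := neg_le_abs _)
        calc |c| ≤ max |x + y| |x| := this
          _ ≤ |x| + |y| := max_le ((abs_add_le x y).trans (by linarith [le_abs_self y, neg_le_abs y])) (by linarith [abs_nonneg y])
      · nlinarith [hslope]
    · have hab : x < x + y := by linarith
      obtain ⟨c, hc, hslope⟩ := exists_hasDerivAt_eq_slope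
        (fun u : ℝ => |u| ^ p) (fun u => p * u * |u| ^ (p - 2)) hab
        (Continuous.continuousOn (by
          exact continuous_abs.rpow_const (fun x => Or.inr hp0.le)))
        (fun u _ => myDeriv1 hp u)
      rw [eq_div_iff (by linarith : x + y - x ≠ 0)] at hslope
      refine ⟨c, ?_, ?_, ?_⟩
      · rw [abs_of_pos hpos, abs_of_pos (by linarith [hc.1] : 0 < c - x)]; linarith [hc.2]
      · have : |c| ≤ max |x| |x + y| := by
          rcases le_or_gt 0 c with h | h
          · exact le_max_of_le_right (by rw [abs_of_nonneg h]; exact (le_abs_self (x+y)).trans' hc.2.le)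
          · exact le_max_of_le_left (by rw [abs_of_neg h]; calc -c ≤ -x := by linarith [hc.1]
                                                             _ ≤ |x| := neg_le_abs _)
        calc |c| ≤ max |x| |x + y| := this
          _ ≤ |x| + |y| := max_le (by linarith [abs_nonneg y]) ((abs_add_le x y).trans (le_refl _))
      · nlinarith [hslope]
  -- bound (g1 c - g1 x) * y
  have hdd : |p * c * |c| ^ (p - 2) - p * x * |x| ^ (p - 2)|
      ≤ p * (p - 1) * |c - x| * (|x| ^ (p - 2) + |c| ^ (p - 2)) := by
    rcases lt_trichotomy x c with h | h | h
    · simpa [abs_of_pos (by linarith : (0:ℝ) < c - x)] using g1_diff_le hp h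
    · simp [h]
    · have := g1_diff_le hp h
      rw [abs_sub_comm] at this
      simpa [abs_of_neg (by linarith : c - x < 0), add_comm] using this
  -- bound |c|^(p-2)
  have hcp : |c| ^ (p - 2) ≤ 2 ^ (p - 2) * (|x| ^ (p - 2) + |y| ^ (p - 2)) := by
    have h1 : |c| ^ (p - 2) ≤ (|x| + |y|) ^ (p - 2) :=
      Real.rpow_le_rpow (abs_nonneg c) hcb (by linarith)
    have h2 : |x| + |y| ≤ 2 * max |x| |y| := by
      rcases max_cases |x| |y| with ⟨h, h'⟩ | ⟨h, h'⟩ <;> rw [h] <;> linarith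
    have h3 : (|x| + |y|) ^ (p - 2) ≤ (2 * max |x| |y|) ^ (p - 2) :=
      Real.rpow_le_rpow (by positivity) h2 (by linarith)
    have h4 : ((2 : ℝ) * max |x| |y|) ^ (p - 2) = 2 ^ (p - 2) * (max |x| |y|) ^ (p - 2) :=
      Real.mul_rpow (by norm_num) (le_max_of_le_left (abs_nonneg x))
    have h5 : (max |x| |y|) ^ (p - 2) ≤ |x| ^ (p - 2) + |y| ^ (p - 2) := by
      rcases max_cases |x| |y| with ⟨h, _⟩ | ⟨h, _⟩ <;> rw [h] <;> linarith
    calc |c| ^ (p - 2) ≤ (|x| + |y|) ^ (p - 2) := h1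
      _ ≤ 2 ^ (p - 2) * (max |x| |y|) ^ (p - 2) := by rw [← h4]; exact h3
      _ ≤ 2 ^ (p - 2) * (|x| ^ (p - 2) + |y| ^ (p - 2)) :=
          mul_le_mul_of_nonneg_left h5 (by positivity)
  -- combine
  have hkey : |x + y| ^ p - |x| ^ p - p * x * |x| ^ (p - 2) * y
      ≤ p * (p - 1) * y ^ 2 * ((1 + 2 ^ (p - 2)) * |x| ^ (p - 2) + 2 ^ (p - 2) * |y| ^ (p - 2)) := by
    have e1 : |x + y| ^ p - |x| ^ p - p * x * |x| ^ (p - 2) * y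
        = (p * c * |c| ^ (p - 2) -  p * x * |x| ^ (p - 2)) * y := by rw [heq]; ring
    rw [e1]
    calc (p * c * |c| ^ (p - 2) - p * x * |x| ^ (p - 2)) * y
        ≤ |(p * c * |c| ^ (p - 2) - p * x * |x| ^ (p - 2)) * y| := le_abs_self _
      _ = |p * c * |c| ^ (p - 2) - p * x * |x| ^ (p - 2)| * |y| := abs_mul _ _
      _ ≤ (p * (p - 1) * |c - x| * (|x| ^ (p - 2) + |c| ^ (p - 2))) * |y| :=
          mul_le_mul_of_nonneg_right hdd (abs_nonneg y)
      _ ≤ (p * (p - 1) * |y| * (|x| ^ (p - 2) + |c| ^ (p - 2))) * |y| := by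
          have hrc := Real.rpow_nonneg (abs_nonneg c) (p - 2)
          exact mul_le_mul_of_nonneg_right (mul_le_mul_of_nonneg_right
            (mul_le_mul_of_nonneg_left hcx hCnn) (by positivity)) (abs_nonneg y)
      _ ≤ (p * (p - 1) * |y| * (|x| ^ (p - 2) + 2 ^ (p - 2) * (|x| ^ (p - 2) + |y| ^ (p - 2)))) * |y| := by
          refine mul_le_mul_of_nonneg_right (mul_le_mul_of_nonneg_left ?_
            (by positivity)) (abs_nonneg y)
          linarith [hcp]
      _ = p * (p - 1) * (|y| * |y|) * ((1 + 2 ^ (p - 2)) * |x| ^ (p - 2) + 2 ^ (p - 2) * |y| ^ (p - 2)) := by ring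
      _ = p * (p - 1) * y ^ 2 * ((1 + 2 ^ (p - 2)) * |x| ^ (p - 2) + 2 ^ (p - 2) * |y| ^ (p - 2)) := by
          rw [abs_mul_abs_self y]; ring
  have hfin : p * (p - 1) * y ^ 2 * ((1 + 2 ^ (p - 2)) * |x| ^ (p - 2) + 2 ^ (p - 2) * |y| ^ (p - 2))
      ≤ p * (p - 1) * 2 ^ p * (|x| ^ (p - 2) * y ^ 2 + |y| ^ p) := by
    have e2 : (1:ℝ) + 2 ^ (p - 2) ≤ 2 ^ p := by
      calc (1:ℝ) + 2 ^ (p - 2) ≤ 2 ^ (p - 2) + 2 ^ (p - 2) := by linarith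
        _ = 2 ^ (p - 2) * 2 := by ring
        _ ≤ 2 ^ (p - 2) * 2 ^ 2 := by nlinarith [h2p]
        _ = 2 ^ ((p - 2) + 2) := by
            rw [Real.rpow_add (by norm_num : (0:ℝ) < 2)]
            norm_num
        _ = 2 ^ p := by norm_num
    have e3 : |y| ^ (p - 2) * y ^ 2 = |y| ^ p := abs_rpow_sub_two_mul_sq hp y
    have hsq : (0:ℝ) ≤ y ^ 2 := sq_nonneg y
    calc p * (p - 1) * y ^ 2 * ((1 + 2 ^ (p - 2)) * |x| ^ (p - 2) + 2 ^ (p - 2) * |y| ^ (p - 2))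
        = p * (p - 1) * ((1 + 2 ^ (p - 2)) * (|x| ^ (p - 2) * y ^ 2) + 2 ^ (p - 2) * (|y| ^ (p - 2) * y ^ 2)) := by ring
      _ = p * (p - 1) * ((1 + 2 ^ (p - 2)) * (|x| ^ (p - 2) * y ^ 2) + 2 ^ (p - 2) * |y| ^ p) := by rw [e3]
      _ ≤ p * (p - 1) * (2 ^ p * (|x| ^ (p - 2) * y ^ 2) + 2 ^ p * |y| ^ p) := by
          refine mul_le_mul_of_nonneg_left (add_le_add ?_ ?_) hCnn
          · exact mul_le_mul_of_nonneg_right e2 (by positivity)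
          · exact mul_le_mul_of_nonneg_right h2p' (Real.rpow_nonneg (abs_nonneg y) p)
      _ = p * (p - 1) * 2 ^ p * (|x| ^ (p - 2) * y ^ 2 + |y| ^ p) := by ring
  linarith [hkey, hfin]

private lemma young_ineq {p : ℝ} (hp : 2 ≤ p) {ε : ℝ} (hε : 0 < ε) (t : ℝ) :
    |t| ^ (p - 2) ≤ ε * |t| ^ p + ε ^ (-(p - 2) / 2) := by
  have hp0 : (0:ℝ) < p := by linarith
  have hw1 : (0:ℝ) ≤ (p - 2) / p := div_nonneg (by linarith) hp0.le
  have hw2 : (0:ℝ) ≤ 2 / p := div_nonneg (by norm_num) hp0.le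
  have hw : (p - 2) / p + 2 / p = 1 := by field_simp; ring
  have hp1 : (0:ℝ) ≤ ε * |t| ^ p := mul_nonneg hε.le (Real.rpow_nonneg (abs_nonneg t) p)
  have hp2 : (0:ℝ) ≤ ε ^ (-(p - 2) / 2) := Real.rpow_nonneg hε.le _
  have key := Real.geom_mean_le_arith_mean2_weighted hw1 hw2 hp1 hp2 hw
  have hid : (ε * |t| ^ p) ^ ((p - 2) / p) * (ε ^ (-(p - 2) / 2)) ^ (2 / p)
      = |t| ^ (p - 2) := by
    rw [Real.mul_rpow hε.le (Real.rpow_nonneg (abs_nonneg t) p),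
        ← Real.rpow_mul (abs_nonneg t), ← Real.rpow_mul hε.le,
        show p * ((p - 2) / p) = p - 2 by field_simp,
        show -(p - 2) / 2 * (2 / p) = -((p - 2) / p) by field_simp]
    rw [mul_comm (ε ^ ((p - 2) / p)) _, mul_assoc, ← Real.rpow_add hε]
    simp
  rw [hid] at key
  have h1 : (p - 2) / p * (ε * |t| ^ p) ≤ 1 * (ε * |t| ^ p) :=
    mul_le_mul_of_nonneg_right (by rw [div_le_one hp0]; linarith) hp1
  have h2 : 2 / p * ε ^ (-(p - 2) / 2) ≤ 1 * ε ^ (-(p - 2) / 2) :=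
    mul_le_mul_of_nonneg_right (by rw [div_le_one hp0]; linarith) hp2
  linarith

private lemma abs_g1_le {p : ℝ} (hp : 2 ≤ p) (t : ℝ) :
    |p * t * |t| ^ (p - 2)| ≤ p * |t| ^ (p - 1) := by
  have hp0 : (0:ℝ) < p := by linarith
  rw [abs_mul, abs_mul, abs_of_pos hp0,
      abs_of_nonneg (Real.rpow_nonneg (abs_nonneg t) _), mul_assoc]
  refine mul_le_mul_of_nonneg_left (le_of_eq ?_) hp0.le
  by_cases ht : t = 0
  · subst ht
    simp [Real.zero_rpow (show p - 1 ≠ 0 by intro h; linarith)]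
  · rw [show p - 1 = (p - 2) + 1 by ring, Real.rpow_add_one (abs_ne_zero.2 ht)]
    ring

private lemma rpow_growth {p : ℝ} (hp : 2 ≤ p) {x : ℝ} (hx : 1 ≤ x) :
    x ^ (p / 2) + x ^ (p / 2 - 1) ≤ (x + 1) ^ (p / 2) := by
  have hx0 : (0:ℝ) < x := by linarith
  have h2 : (1:ℝ) ≤ p / 2 := by linarith
  obtain ⟨c, hc, hslope⟩ := exists_hasDerivAt_eq_slope
    (fun u : ℝ => u ^ (p / 2)) (fun u => p / 2 * u ^ (p / 2 - 1)) (by linarith : x < x + 1)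
    (Continuous.continuousOn (by
      exact continuous_id.rpow_const fun u => Or.inr (by linarith)))
    (fun u _ => Real.hasDerivAt_rpow_const (Or.inr h2))
  rw [show x + 1 - x = 1 by ring, div_one] at hslope
  have hcx : x ^ (p / 2 - 1) ≤ c ^ (p / 2 - 1) :=
    Real.rpow_le_rpow hx0.le hc.1.le (by linarith)
  have hpc : (1:ℝ) * x ^ (p / 2 - 1) ≤ (p / 2) * c ^ (p / 2 - 1) :=
    mul_le_mul h2 hcx (Real.rpow_nonneg hx0.le _) (by linarith)
  linarith [hslope ▸ hpc]
set_option maxHeartbeats 1600000 in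
theorem stmt_12 {Ω : Type*} [MeasurableSpace Ω] (μ : Measure Ω) [IsProbabilityMeasure μ]
    (ξ : ℕ → Ω → ℝ) (hmeas : ∀ i, Measurable (ξ i))
    (hindep : iIndepFun ξ μ)
    (hident : ∀ i, IdentDistrib (ξ i) (ξ 0) μ μ)
    (hint : Integrable (ξ 0) μ) (hcent : ∫ ω, ξ 0 ω ∂μ = 0)
    (hvar : ∫⁻ ω, ENNReal.ofReal ((ξ 0 ω) ^ 2) ∂μ < ⊤)
    (p : ℝ) (hp : 2 ≤ p)
    (hmom : ∫⁻ ω, ENNReal.ofReal (|ξ 0 ω| ^ p) ∂μ < ⊤) :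
    ⨆ n : ℕ, ∫⁻ ω,
        ENNReal.ofReal (|(Real.sqrt n)⁻¹ * ∑ i ∈ Finset.range n, ξ i ω| ^ p) ∂μ < ⊤ := by
  classical
  have hp0 : (0:ℝ) < p := by linarith
  set P : ℝ≥0∞ := ENNReal.ofReal p with hPdef
  have hP0 : P ≠ 0 := by
    simp only [hPdef, ne_eq, ENNReal.ofReal_eq_zero, not_le]
    linarith
  have hPtop : P ≠ ⊤ := ENNReal.ofReal_ne_top
  have hPr : P.toReal = p := ENNReal.toReal_ofReal hp0.le
  -- ξ 0 is in L^p
  have hmem0 : MemLp (ξ 0) P μ := by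
    refine ⟨(hmeas 0).aestronglyMeasurable, ?_⟩
    rw [eLpNorm_eq_lintegral_rpow_enorm_toReal hP0 hPtop, hPr]
    have hcongr : ∀ ω, ‖ξ 0 ω‖ₑ ^ p = ENNReal.ofReal (|ξ 0 ω| ^ p) := by
      intro ω
      rw [Real.enorm_eq_ofReal_abs, ← ENNReal.ofReal_rpow_of_nonneg (abs_nonneg _) hp0.le]
    calc (∫⁻ ω, ‖ξ 0 ω‖ₑ ^ p ∂μ) ^ (1/p)
        = (∫⁻ ω, ENNReal.ofReal (|ξ 0 ω| ^ p) ∂μ) ^ (1/p) := by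
          rw [lintegral_congr hcongr]
      _ < ⊤ := ENNReal.rpow_lt_top_of_nonneg (by positivity) hmom.ne
  have hmemi : ∀ i, MemLp (ξ i) P μ := fun i => ((hident i).memLp_iff).2 hmem0
  -- partial sums
  set T : ℕ → Ω → ℝ := fun n ω => ∑ i ∈ Finset.range n, ξ i ω with hT
  have hTeq : ∀ n, (∑ i ∈ Finset.range n, ξ i) = T n := by
    intro n
    funext ω
    simp [hT]
  have hTmeas : ∀ n, Measurable (T n) := fun n =>
    Finset.measurable_sum _ (fun i _ => hmeas i)
  have hmemT : ∀ n, MemLp (T n) P μ := by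
    intro n
    have h := memLp_finsetSum' (Finset.range n) (fun i _ => hmemi i)
    rwa [hTeq n] at h
  -- integrability facts
  have memT_sub : ∀ q : ℝ, 0 ≤ q → q ≤ p → ∀ n, Integrable (fun ω => |T n ω| ^ q) μ := by
    intro q hq hqp n
    have h1 : MemLp (T n) (ENNReal.ofReal q) μ :=
      (hmemT n).mono_exponent (ENNReal.ofReal_le_ofReal hqp)
    have h2 := h1.integrable_norm_rpow'
    rw [ENNReal.toReal_ofReal hq] at h2
    simpa [Real.norm_eq_abs] using h2
  have hint_Tp : ∀ n, Integrable (fun ω => |T n ω| ^ p) μ :=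
    memT_sub p hp0.le le_rfl
  have hintξ : ∀ i, Integrable (ξ i) μ := fun i =>
    (hmemi i).integrable (by exact ENNReal.one_le_ofReal.2 (by linarith))
  have hintξ2 : ∀ i, Integrable (fun ω => ξ i ω ^ 2) μ := by
    intro i
    refine ((hmemi i).mono_exponent ?_).integrable_sq
    rw [show (2:ℝ≥0∞) = ENNReal.ofReal 2 by norm_num]
    exact ENNReal.ofReal_le_ofReal hp
  have hintξp : ∀ i, Integrable (fun ω => |ξ i ω| ^ p) μ := by
    intro i
    have h2 := (hmemi i).integrable_norm_rpow'
    rw [hPr] at h2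
    simpa [Real.norm_eq_abs] using h2
  have hint_g1 : ∀ n, Integrable (fun ω => p * T n ω * |T n ω| ^ (p - 2)) μ := by
    intro n
    refine Integrable.mono' ((memT_sub (p-1) (by linarith) (by linarith) n).const_mul p)
      ((g1_cont hp).measurable.comp (hTmeas n)).aestronglyMeasurable ?_
    filter_upwards with ω
    rw [Real.norm_eq_abs]
    exact abs_g1_le hp _
  -- independence of T n and ξ n
  have hindS : ∀ n, IndepFun (T n) (ξ n) μ := by
    intro n
    have h := hindep.indepFun_finsetSum_of_notMem hmeas
      (Finset.notMem_range_self (n := n))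
    rwa [hTeq n] at h
  -- constants
  set m2 : ℝ := ∫ ω, (ξ 0 ω) ^ 2 ∂μ with hm2
  set mq : ℝ := ∫ ω, |ξ 0 ω| ^ p ∂μ with hmq
  have hm2nn : 0 ≤ m2 := integral_nonneg (fun ω => sq_nonneg _)
  have hmqnn : 0 ≤ mq := integral_nonneg (fun ω => Real.rpow_nonneg (abs_nonneg _) p)
  set C : ℝ := p * (p - 1) * 2 ^ p with hC
  have h2p : (0:ℝ) < 2 ^ p := Real.rpow_pos_of_pos two_pos p
  have hCpos : 0 < C := by
    have : (0:ℝ) < p * (p - 1) := by nlinarith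
    exact mul_pos this h2p
  -- identically distributed transfers
  have hEξ : ∀ i, ∫ ω, ξ i ω ∂μ = 0 := fun i => by rw [(hident i).integral_eq, hcent]
  have hEξ2 : ∀ i, ∫ ω, (ξ i ω) ^ 2 ∂μ = m2 := fun i =>
    ((hident i).comp (measurable_id.pow_const 2)).integral_eq
  have hEξp : ∀ i, ∫ ω, |ξ i ω| ^ p ∂μ = mq := fun i =>
    ((hident i).comp ((continuous_abs.rpow_const
      (fun _ => Or.inr hp0.le)).measurable)).integral_eq
  -- moments of partial sums
  set A : ℕ → ℝ := fun n => ∫ ω, |T n ω| ^ p ∂μ with hA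
  set B : ℕ → ℝ := fun n => ∫ ω, |T n ω| ^ (p - 2) ∂μ with hB
  have hAnn : ∀ n, 0 ≤ A n := fun n =>
    integral_nonneg (fun ω => Real.rpow_nonneg (abs_nonneg _) p)
  -- products with independence
  have hint_prod1 : ∀ n, Integrable (fun ω => (p * T n ω * |T n ω| ^ (p - 2)) * ξ n ω) μ := by
    intro n
    exact IndepFun.integrable_mul ((hindS n).comp (g1_cont hp).measurable measurable_id)
      (hint_g1 n) (hintξ n)
  have hint_prod2 : ∀ n, Integrable (fun ω => |T n ω| ^ (p - 2) * (ξ n ω) ^ 2) μ := by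
    intro n
    exact IndepFun.integrable_mul ((hindS n).comp
      ((continuous_abs.rpow_const (fun _ => Or.inr (by linarith))).measurable)
      (measurable_id.pow_const 2))
      (memT_sub (p-2) (by linarith) (by linarith) n) (hintξ2 n)
  have key1 : ∀ n, ∫ ω, (p * T n ω * |T n ω| ^ (p - 2)) * ξ n ω ∂μ = 0 := by
    intro n
    have h := IndepFun.integral_fun_mul_eq_mul_integral
      ((hindS n).comp (g1_cont hp).measurable measurable_id) (hint_g1 n).aestronglyMeasurable (hintξ n).aestronglyMeasurable
    calc ∫ ω, (p * T n ω * |T n ω| ^ (p - 2)) * ξ n ω ∂μ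
        = (∫ ω, p * T n ω * |T n ω| ^ (p - 2) ∂μ) * ∫ ω, ξ n ω ∂μ := h
      _ = 0 := by rw [hEξ n, mul_zero]
  have key2 : ∀ n, ∫ ω, |T n ω| ^ (p - 2) * (ξ n ω) ^ 2 ∂μ = B n * m2 := by
    intro n
    have h := IndepFun.integral_fun_mul_eq_mul_integral
      ((hindS n).comp ((continuous_abs.rpow_const
        (fun _ => Or.inr (by linarith))).measurable) (measurable_id.pow_const 2))
      (memT_sub (p-2) (by linarith) (by linarith) n).aestronglyMeasurable (hintξ2 n).aestronglyMeasurable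
    calc ∫ ω, |T n ω| ^ (p - 2) * (ξ n ω) ^ 2 ∂μ
        = (∫ ω, |T n ω| ^ (p - 2) ∂μ) * ∫ ω, (ξ n ω) ^ 2 ∂μ := h
      _ = B n * m2 := by rw [hEξ2 n]
  -- the recursion
  have recur : ∀ n, A (n+1) ≤ A n + C * (B n * m2 + mq) := by
    intro n
    have hsum : ∀ ω, T (n+1) ω = T n ω + ξ n ω := fun ω => Finset.sum_range_succ _ n
    have hptw : ∀ ω, |T (n+1) ω| ^ p ≤ |T n ω| ^ p + (p * T n ω * |T n ω| ^ (p - 2)) * ξ n ω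
        + C * (|T n ω| ^ (p - 2) * (ξ n ω) ^ 2 + |ξ n ω| ^ p) := by
      intro ω
      rw [hsum ω]
      have h := taylor_ineq hp (T n ω) (ξ n ω)
      rw [hC]
      linarith
    have hint_r2 : Integrable (fun ω => |T n ω| ^ (p - 2) * (ξ n ω) ^ 2 + |ξ n ω| ^ p) μ :=
      (hint_prod2 n).add (hintξp n)
    have hRint : Integrable (fun ω => |T n ω| ^ p + (p * T n ω * |T n ω| ^ (p - 2)) * ξ n ω
        + C * (|T n ω| ^ (p - 2) * (ξ n ω) ^ 2 + |ξ n ω| ^ p)) μ :=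
      ((hint_Tp n).add (hint_prod1 n)).add (hint_r2.const_mul C)
    calc A (n+1) ≤ ∫ ω, (|T n ω| ^ p + (p * T n ω * |T n ω| ^ (p - 2)) * ξ n ω
          + C * (|T n ω| ^ (p - 2) * (ξ n ω) ^ 2 + |ξ n ω| ^ p)) ∂μ :=
        integral_mono (hint_Tp (n+1)) hRint hptw
      _ = A n + C * (B n * m2 + mq) := by
        have i1 : Integrable (fun ω => |T n ω| ^ p
            + (p * T n ω * |T n ω| ^ (p - 2)) * ξ n ω) μ := (hint_Tp n).add (hint_prod1 n)
        have i2 : Integrable (fun ω => C * (|T n ω| ^ (p - 2) * (ξ n ω) ^ 2 + |ξ n ω| ^ p)) μ :=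
          hint_r2.const_mul C
        rw [integral_add i1 i2, integral_add (hint_Tp n) (hint_prod1 n),
          integral_const_mul, integral_add (hint_prod2 n) (hintξp n),
          key1 n, key2 n, hEξp n, add_zero]
  -- Young bound on B n
  have youngB : ∀ n, ∀ ε : ℝ, 0 < ε → B n ≤ ε * A n + ε ^ (-(p - 2) / 2) := by
    intro n ε hε
    have h2 : Integrable (fun ω => ε * |T n ω| ^ p + ε ^ (-(p - 2) / 2)) μ :=
      ((hint_Tp n).const_mul ε).add (integrable_const _)
    calc B n ≤ ∫ ω, (ε * |T n ω| ^ p + ε ^ (-(p - 2) / 2)) ∂μ :=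
        integral_mono (memT_sub (p-2) (by linarith) (by linarith) n) h2
          (fun ω => young_ineq hp hε _)
      _ = ε * A n + ε ^ (-(p - 2) / 2) := by
        have i1 : Integrable (fun ω => ε * |T n ω| ^ p) μ := (hint_Tp n).const_mul ε
        rw [integral_add i1 (integrable_const _), integral_const_mul, integral_const,
          probReal_univ]
        simp [hA]
  -- constants for induction
  set δ : ℝ := (2 * C * (m2 + 1))⁻¹ with hδdef
  have hδpos : 0 < δ := by
    rw [hδdef]
    apply inv_pos.2
    nlinarith
  set D : ℝ := C * m2 * δ ^ (-(p - 2) / 2) + C * mq with hD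
  have hDnn : 0 ≤ D :=
    add_nonneg (mul_nonneg (mul_nonneg hCpos.le hm2nn) (Real.rpow_nonneg hδpos.le _))
      (mul_nonneg hCpos.le hmqnn)
  set K : ℝ := 2 * D + C * (m2 + mq) + 1 with hK
  have hKnn : 0 ≤ K := by
    have : 0 ≤ C * (m2 + mq) := mul_nonneg hCpos.le (by linarith)
    linarith
  -- base computations
  have hA0 : A 0 = 0 := by
    have : ∀ ω, |T 0 ω| ^ p = 0 := by
      intro ω
      simp [hT, Real.zero_rpow hp0.ne']
    calc A 0 = ∫ ω, (0:ℝ) ∂μ := by rw [hA]; exact integral_congr_ae (ae_of_all _ this)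
      _ = 0 := integral_zero _ _
  have hB0 : B 0 ≤ 1 := by
    have h1 : ∀ ω, |T 0 ω| ^ (p - 2) ≤ 1 := by
      intro ω
      by_cases h : p = 2
      · simp [hT, h]
      · simp only [hT]
        rw [Finset.range_zero, Finset.sum_empty, abs_zero,
          Real.zero_rpow (show p - 2 ≠ 0 by intro hc; apply h; linarith)]
        norm_num
    calc B 0 ≤ ∫ _ω, (1:ℝ) ∂μ :=
        integral_mono (memT_sub (p-2) (by linarith) (by linarith) 0) (integrable_const 1) h1
      _ = 1 := by simp
  clear_value m2 mq C δ D K A B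
  -- main induction
  have hbound : ∀ n, A n ≤ K * (n : ℝ) ^ (p / 2) := by
    intro n
    induction n with
    | zero =>
      simp only [Nat.cast_zero]
      rw [Real.zero_rpow (show p / 2 ≠ 0 by positivity), mul_zero, hA0]
    | succ n ih =>
      rcases Nat.eq_zero_or_pos n with rfl | hn
      · have h1 := recur 0
        rw [hA0] at h1
        have h2 : B 0 * m2 ≤ m2 := by nlinarith
        have h3 : A 1 ≤ C * (m2 + mq) := by nlinarith
        have h4 : ((0:ℕ) + 1 : ℝ) ^ (p / 2) = 1 := by norm_num
        have h5 : K * (((0:ℕ) + 1 : ℕ) : ℝ) ^ (p / 2) = K := by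
          norm_num
        rw [h5]
        linarith
      · have hn1 : (1:ℝ) ≤ (n:ℝ) := by exact_mod_cast hn
        have hnpos : (0:ℝ) < (n:ℝ) := by linarith
        set ε : ℝ := δ / n with hεdef
        have hεpos : 0 < ε := div_pos hδpos hnpos
        clear_value ε
        have hrnn : (0:ℝ) ≤ (n:ℝ) ^ (p / 2 - 1) := Real.rpow_nonneg hnpos.le _
        have hone : (1:ℝ) ≤ (n:ℝ) ^ (p / 2 - 1) := Real.one_le_rpow hn1 (by linarith)
        -- ε * A n ≤ δ * K * n^(p/2 - 1)
        have h3 : ((n:ℝ)) ^ (p / 2) / (n:ℝ) = (n:ℝ) ^ (p / 2 - 1) := by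
          rw [Real.rpow_sub hnpos, Real.rpow_one]
        have hεA : ε * A n ≤ δ * K * (n:ℝ) ^ (p / 2 - 1) := by
          have h1 : ε * A n ≤ ε * (K * (n:ℝ) ^ (p / 2)) :=
            mul_le_mul_of_nonneg_left ih hεpos.le
          have h2 : ε * (K * (n:ℝ) ^ (p / 2)) = δ * K * ((n:ℝ) ^ (p / 2) / (n:ℝ)) := by
            rw [hεdef]; ring
          rw [h2, h3] at h1
          exact h1
        -- ε^(-(p-2)/2) = δ^(-(p-2)/2) * n^(p/2-1)
        have hεE : ε ^ (-(p - 2) / 2) = δ ^ (-(p - 2) / 2) * (n:ℝ) ^ (p / 2 - 1) := by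
          rw [hεdef, Real.div_rpow hδpos.le hnpos.le, neg_div, Real.rpow_neg hnpos.le,
            div_eq_mul_inv, inv_inv, show (p - 2) / 2 = p / 2 - 1 by ring]
        have hδsmall : C * m2 * δ ≤ 1 / 2 := by
          have h1 : δ * (2 * C * (m2 + 1)) = 1 := by
            rw [hδdef]
            field_simp
          nlinarith [h1, mul_pos hCpos hδpos, hm2nn]
        -- assemble the step
        have step := recur n
        have hBn := youngB n ε hεpos
        have hchain : A (n+1) ≤ K * (n:ℝ) ^ (p / 2) + (1/2 * K + D) * (n:ℝ) ^ (p / 2 - 1) := by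
          have e1 : C * (B n * m2 + mq) = C * m2 * B n + C * mq := by ring
          have e2 : C * m2 * B n ≤ C * m2 * (ε * A n + ε ^ (-(p - 2) / 2)) :=
            mul_le_mul_of_nonneg_left hBn (mul_nonneg hCpos.le hm2nn)
          rw [mul_add] at e2
          have e3 : C * m2 * (ε * A n) ≤ C * m2 * (δ * K * (n:ℝ) ^ (p / 2 - 1)) :=
            mul_le_mul_of_nonneg_left hεA (mul_nonneg hCpos.le hm2nn)
          have e4 : C * m2 * (δ * K * (n:ℝ) ^ (p / 2 - 1))
              = (C * m2 * δ) * (K * (n:ℝ) ^ (p / 2 - 1)) := by ring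
          have e5 : (C * m2 * δ) * (K * (n:ℝ) ^ (p / 2 - 1))
              ≤ (1/2) * (K * (n:ℝ) ^ (p / 2 - 1)) :=
            mul_le_mul_of_nonneg_right hδsmall (mul_nonneg hKnn hrnn)
          have e6 : C * m2 * ε ^ (-(p - 2) / 2)
              = (C * m2 * δ ^ (-(p - 2) / 2)) * (n:ℝ) ^ (p / 2 - 1) := by
            rw [hεE]; ring
          have e7 : C * mq ≤ (C * mq) * (n:ℝ) ^ (p / 2 - 1) :=
            le_mul_of_one_le_right (mul_nonneg hCpos.le hmqnn) hone
          have e8 : (C * m2 * δ ^ (-(p - 2) / 2)) * (n:ℝ) ^ (p / 2 - 1)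
              + (C * mq) * (n:ℝ) ^ (p / 2 - 1) = D * (n:ℝ) ^ (p / 2 - 1) := by
            rw [hD]; ring
          linarith [step, ih, e1, e2, e3, e4, e5, e6, e7, e8]
        have hgrow : (n:ℝ) ^ (p / 2) + (n:ℝ) ^ (p / 2 - 1) ≤ ((n:ℝ) + 1) ^ (p / 2) :=
          rpow_growth hp hn1
        have hhalf : 1/2 * K + D ≤ K := by
          rw [hK]
          have : 0 ≤ C * (m2 + mq) := mul_nonneg hCpos.le (by linarith)
          linarith
        calc A (n+1)
            ≤ K * (n:ℝ) ^ (p / 2) + (1/2 * K + D) * (n:ℝ) ^ (p / 2 - 1) := hchain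
          _ ≤ K * (n:ℝ) ^ (p / 2) + K * (n:ℝ) ^ (p / 2 - 1) := by
              have := mul_le_mul_of_nonneg_right hhalf hrnn
              linarith
          _ = K * ((n:ℝ) ^ (p / 2) + (n:ℝ) ^ (p / 2 - 1)) := by ring
          _ ≤ K * ((n:ℝ) + 1) ^ (p / 2) := mul_le_mul_of_nonneg_left hgrow hKnn
          _ = K * (((n:ℕ) + 1 : ℕ) : ℝ) ^ (p / 2) := by push_cast; ring_nf
  -- conclusion
  refine lt_of_le_of_lt (iSup_le fun n => ?_) (ENNReal.ofReal_lt_top (r := K))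
  rcases Nat.eq_zero_or_pos n with rfl | hn
  · have h0 : ∀ ω, ENNReal.ofReal (|(Real.sqrt (0:ℕ))⁻¹ * ∑ i ∈ Finset.range 0, ξ i ω| ^ p)
        = 0 := by
      intro ω
      simp [Real.zero_rpow hp0.ne']
    rw [lintegral_congr h0]
    simp
  · have hnpos : (0:ℝ) < (n:ℝ) := by exact_mod_cast hn
    have hsq : (0:ℝ) < Real.sqrt n := Real.sqrt_pos.2 hnpos
    set c : ℝ := ((Real.sqrt n)⁻¹) ^ p with hc
    have hcnn : 0 ≤ c := Real.rpow_nonneg (inv_nonneg.2 hsq.le) p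
    have hptw : ∀ ω, |(Real.sqrt n)⁻¹ * T n ω| ^ p = c * |T n ω| ^ p := by
      intro ω
      rw [abs_mul, Real.mul_rpow (abs_nonneg _) (abs_nonneg _),
        abs_of_nonneg (inv_nonneg.2 hsq.le)]
    have hcK : c * ((n:ℝ) ^ (p / 2)) = 1 := by
      rw [hc, Real.sqrt_eq_rpow, ← Real.rpow_neg hnpos.le, ← Real.rpow_mul hnpos.le,
        ← Real.rpow_add hnpos]
      rw [show -(1/2) * p + p / 2 = 0 by ring, Real.rpow_zero]
    calc ∫⁻ ω, ENNReal.ofReal (|(Real.sqrt n)⁻¹ * ∑ i ∈ Finset.range n, ξ i ω| ^ p) ∂μ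
        = ∫⁻ ω, ENNReal.ofReal (c * |T n ω| ^ p) ∂μ := by
          refine lintegral_congr fun ω => ?_
          rw [show (∑ i ∈ Finset.range n, ξ i ω) = T n ω from by simp [hT], hptw ω]
      _ = ENNReal.ofReal (∫ ω, c * |T n ω| ^ p ∂μ) := by
          refine (ofReal_integral_eq_lintegral_ofReal ((hint_Tp n).const_mul c)
            (ae_of_all _ fun ω => ?_)).symm
          have := Real.rpow_nonneg (abs_nonneg (T n ω)) p
          positivity
      _ ≤ ENNReal.ofReal K := by
          refine ENNReal.ofReal_le_ofReal ?_
          rw [integral_const_mul, show (∫ ω, |T n ω| ^ p ∂μ) = A n from (congrFun hA n).symm]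
          calc c * A n ≤ c * (K * (n:ℝ) ^ (p / 2)) :=
              mul_le_mul_of_nonneg_left (hbound n) hcnn
            _ = K * (c * (n:ℝ) ^ (p / 2)) := by ring
            _ = K := by rw [hcK, mul_one]
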